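/- arXiv:2601.11347 — 8 statements merged into one kernel-verified Lean document; each statement's English description precedes it below -/
import Mathlib

section
/- If f : [a,b] → ℝ is Borel measurable and non-decreasing, then its c-envelope f^c(x) = inf { E_Q[f] : Q a Borel probability measure on [a,b] with mean x and f Q-integrable } is also non-decreasing in x. -/
open MeasureTheory Set

/-- The c-envelope of `f` on `[a,b]`: infimum of `∫ f dQ` over Borel probability
measures `Q` supported in `[a,b]` with mean `x` under which `f` is integrable. -/
noncomputable def cEnv (a b : ℝ) (f : ℝ → ℝ) (x : ℝ) : EReal :=
  sInf {y : EReal | ∃ Q : Measure ℝ, IsProbabilityMeasure Q ∧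
    Q (Icc a b)ᶜ = 0 ∧ Integrable f Q ∧ (∫ t, t ∂Q) = x ∧
    y = ((∫ t, f t ∂Q : ℝ) : EReal)}

theorem stmt1 (a b : ℝ) (hab : a < b) (f : ℝ → ℝ) (hf : Measurable f)
    (hmono : MonotoneOn f (Icc a b)) :
    MonotoneOn (cEnv a b f) (Icc a b) := by
  intro x hx y hy hxy
  rcases eq_or_lt_of_le hxy with rfl | hlt
  · exact le_rfl
  have hya : a < y := lt_of_le_of_lt hx.1 hlt
  set l : ℝ := (x - a) / (y - a) with hl_def
  have hl0 : 0 ≤ l := div_nonneg (by linarith [hx.1]) (by linarith)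
  have hl1 : l ≤ 1 := (div_le_one (by linarith)).2 (by linarith)
  set T : ℝ → ℝ := fun t => a + l * (t - a) with hT_def
  have hTmeas : Measurable T := by fun_prop
  have hmem : ∀ t ∈ Icc a b, T t ∈ Icc a b := by
    intro t ht
    constructor
    · have : 0 ≤ l * (t - a) := mul_nonneg hl0 (by linarith [ht.1])
      simp only [hT_def]; linarith
    · have : l * (t - a) ≤ 1 * (t - a) :=
        mul_le_mul_of_nonneg_right hl1 (by linarith [ht.1])
      simp only [hT_def]; linarith [ht.2]
  have hTle : ∀ t ∈ Icc a b, T t ≤ t := by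
    intro t ht
    have : l * (t - a) ≤ 1 * (t - a) :=
      mul_le_mul_of_nonneg_right hl1 (by linarith [ht.1])
    simp only [hT_def]; linarith
  unfold cEnv
  apply (fun {s t : Set EReal} (h : ∀ x ∈ t, ∃ y ∈ s, y ≤ x) =>
    le_sInf fun x hx => let ⟨_, hy, hyx⟩ := h x hx; (sInf_le hy).trans hyx :
    ∀ {s t : Set EReal}, (∀ x ∈ t, ∃ y ∈ s, y ≤ x) → sInf s ≤ sInf t)
  rintro z ⟨Q, hQ, hQsupp, hQint, hQmean, rfl⟩
  have haeQ : ∀ᵐ t ∂Q, t ∈ Icc a b := by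
    rw [ae_iff]
    exact hQsupp
  have hid : Integrable (fun t => t) Q := by
    apply Integrable.mono' (integrable_const (max |a| |b|))
      measurable_id'.aestronglyMeasurable
    filter_upwards [haeQ] with t ht
    rw [Real.norm_eq_abs, abs_le]
    have h1 : |a| ≤ max |a| |b| := le_max_left _ _
    have h2 : |b| ≤ max |a| |b| := le_max_right _ _
    have h3 := neg_abs_le a
    have h4 := le_abs_self b
    exact ⟨by linarith [ht.1], by linarith [ht.2]⟩
  set Q' : Measure ℝ := Measure.map T Q with hQ'_def
  have hprob : IsProbabilityMeasure Q' := Measure.isProbabilityMeasure_map hTmeas.aemeasurable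
  have hsupp' : Q' (Icc a b)ᶜ = 0 := by
    rw [hQ'_def, Measure.map_apply hTmeas measurableSet_Icc.compl]
    refine measure_mono_null ?_ hQsupp
    intro t ht
    simp only [mem_preimage, mem_compl_iff] at ht ⊢
    intro htab
    exact ht (hmem t htab)
  have haemem : a ∈ Icc a b := ⟨le_refl a, le_of_lt hab⟩
  have haecmp : ∀ᵐ t ∂Q, f (T t) ≤ f t := by
    filter_upwards [haeQ] with t ht
    exact hmono (hmem t ht) ht (hTle t ht)
  have hcomp : Integrable (fun t => f (T t)) Q := by
    apply Integrable.mono' ((integrable_const |f a|).add hQint.abs)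
      (hf.comp hTmeas).aestronglyMeasurable
    filter_upwards [haeQ] with t ht
    have h1 : f a ≤ f (T t) := hmono haemem (hmem t ht) (hmem t ht).1
    have h2 : f (T t) ≤ f t := hmono (hmem t ht) ht (hTle t ht)
    simp only [id_eq, Function.comp_apply, Pi.add_apply]
    rw [Real.norm_eq_abs, abs_le]
    have h3 := neg_abs_le (f a)
    have h4 := le_abs_self (f t)
    have h5 := abs_nonneg (f t)
    have h6 := abs_nonneg (f a)
    exact ⟨by linarith, by linarith⟩
  have hint' : Integrable f Q' := by
    rw [hQ'_def, integrable_map_measure hf.aestronglyMeasurable hTmeas.aemeasurable]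
    exact hcomp
  have hmean' : (∫ t, t ∂Q') = x := by
    rw [hQ'_def, integral_map hTmeas.aemeasurable measurable_id'.aestronglyMeasurable]
    simp only [id_eq, hT_def]
    have hg : Integrable (fun t => l * (t - a)) Q :=
      ((hid.sub (integrable_const a)).const_mul l)
    rw [integral_add (integrable_const a) hg, integral_const, integral_const_mul l,
      integral_sub hid (integrable_const a), integral_const, hQmean]
    simp only [measure_univ, probReal_univ, ENNReal.toReal_one, one_smul, smul_eq_mul, one_mul]
    rw [hl_def, div_mul_eq_mul_div, mul_div_assoc,
      div_self (ne_of_gt (by linarith : (0:ℝ) < y - a)), mul_one]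
    ring
  have hle : (∫ t, f t ∂Q') ≤ ∫ t, f t ∂Q := by
    rw [hQ'_def, integral_map hTmeas.aemeasurable hf.aestronglyMeasurable]
    exact integral_mono_ae hcomp hQint haecmp
  exact ⟨((∫ t, f t ∂Q' : ℝ) : EReal), ⟨Q', hprob, hsupp', hint', hmean', rfl⟩,
    EReal.coe_le_coe_iff.2 hle⟩
end

section
/- For any Borel measurable f : [a,b] → ℝ and any x ∈ [a,b], the c-envelope satisfies f^c(x) = inf over pairs x₁ ≤ x ≤ x₂ in [a,b] of ((x₂-x)/(x₂-x₁)) f(x₁) + ((x-x₁)/(x₂-x₁)) f(x₂) (with the convention 0/0 = 1); that is, the infimum of E_Q[f] over probability measures with mean x equals the infimum over measures supported on at most two points with mean x. -/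
open MeasureTheory Set

lemma myIntegrableDirac (g : ℝ → ℝ) (p : ℝ) : Integrable g (Measure.dirac p) := by
  have h : g =ᵐ[Measure.dirac p] (fun _ => g p) := by
    rw [Filter.EventuallyEq, ae_dirac_eq]
    exact Filter.eventually_pure.2 rfl
  exact (integrable_const (g p)).congr h.symm

lemma myTwoPoint (a b : ℝ) (f : ℝ → ℝ) (x x₁ x₂ : ℝ)
    (h1 : a ≤ x₁) (h2 : x₁ ≤ x) (h3 : x ≤ x₂) (h4 : x₂ ≤ b) (h5 : x₁ < x₂) :
    ∃ Q : Measure ℝ, IsProbabilityMeasure Q ∧ Q (Set.Icc a b)ᶜ = 0 ∧ Integrable f Q ∧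
      (∫ t, t ∂Q) = x ∧
      (∫ t, f t ∂Q) = (x₂ - x)/(x₂ - x₁) * f x₁ + (x - x₁)/(x₂ - x₁) * f x₂ := by
  have hd : (0:ℝ) < x₂ - x₁ := by linarith
  set l₁ : ℝ := (x₂ - x)/(x₂ - x₁) with hl₁def
  set l₂ : ℝ := (x - x₁)/(x₂ - x₁) with hl₂def
  have hl1 : 0 ≤ l₁ := div_nonneg (by linarith) hd.le
  have hl2 : 0 ≤ l₂ := div_nonneg (by linarith) hd.le
  have hsum : l₁ + l₂ = 1 := by
    rw [hl₁def, hl₂def, ← add_div]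
    rw [div_eq_one_iff_eq (by linarith)]; ring
  set Q : Measure ℝ := ENNReal.ofReal l₁ • Measure.dirac x₁ + ENNReal.ofReal l₂ • Measure.dirac x₂
    with hQdef
  have hint : ∀ g : ℝ → ℝ, Integrable g Q := fun g =>
    ((myIntegrableDirac g x₁).smul_measure ENNReal.ofReal_ne_top).add_measure
      ((myIntegrableDirac g x₂).smul_measure ENNReal.ofReal_ne_top)
  have hI : ∀ g : ℝ → ℝ, (∫ t, g t ∂Q) = l₁ * g x₁ + l₂ * g x₂ := by
    intro g
    rw [hQdef, integral_add_measure
      ((myIntegrableDirac g x₁).smul_measure ENNReal.ofReal_ne_top)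
      ((myIntegrableDirac g x₂).smul_measure ENNReal.ofReal_ne_top),
      integral_smul_measure, integral_smul_measure, integral_dirac, integral_dirac,
      ENNReal.toReal_ofReal hl1, ENNReal.toReal_ofReal hl2]
    simp [smul_eq_mul]
  refine ⟨Q, ?_, ?_, hint f, ?_, ?_⟩
  · constructor
    rw [hQdef]
    simp only [Measure.add_apply, Measure.smul_apply, Measure.dirac_apply' _ MeasurableSet.univ,
      Set.indicator_of_mem (Set.mem_univ _), smul_eq_mul, mul_one, Pi.one_apply]
    rw [← ENNReal.ofReal_add hl1 hl2, hsum, ENNReal.ofReal_one]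
  · rw [hQdef]
    simp only [Measure.add_apply, Measure.smul_apply,
      Measure.dirac_apply' _ measurableSet_Icc.compl]
    rw [Set.indicator_of_notMem (by simp [Set.mem_Icc]; constructor <;> linarith),
      Set.indicator_of_notMem (by simp [Set.mem_Icc]; constructor <;> linarith)]
    simp
  · rw [hI (fun t => t)]
    rw [hl₁def, hl₂def]
    field_simp
    ring
  · rw [hI f]

theorem stmt4 (a b : ℝ) (hab : a < b) (f : ℝ → ℝ) (hf : Measurable f)
    (x : ℝ) (hx : x ∈ Icc a b) :
    cEnv a b f x =
      sInf {y : EReal | ∃ x₁ x₂ : ℝ, a ≤ x₁ ∧ x₁ ≤ x ∧ x ≤ x₂ ∧ x₂ ≤ b ∧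
        ((x₁ = x₂ ∧ y = ((f x : ℝ) : EReal)) ∨
         (x₁ < x₂ ∧ y = ((((x₂ - x) / (x₂ - x₁)) * f x₁ +
            ((x - x₁) / (x₂ - x₁)) * f x₂ : ℝ) : EReal)))} := by
  set S2 : Set EReal := {y : EReal | ∃ x₁ x₂ : ℝ, a ≤ x₁ ∧ x₁ ≤ x ∧ x ≤ x₂ ∧ x₂ ≤ b ∧
        ((x₁ = x₂ ∧ y = ((f x : ℝ) : EReal)) ∨
         (x₁ < x₂ ∧ y = ((((x₂ - x) / (x₂ - x₁)) * f x₁ +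
            ((x - x₁) / (x₂ - x₁)) * f x₂ : ℝ) : EReal)))} with hS2
  have hfx_mem : ((f x : ℝ) : EReal) ∈ S2 :=
    ⟨x, x, hx.1, le_rfl, le_rfl, hx.2, Or.inl ⟨rfl, rfl⟩⟩
  have hmfx : sInf S2 ≤ ((f x : ℝ) : EReal) := sInf_le hfx_mem
  apply le_antisymm
  · -- cEnv ≤ sInf S2
    apply le_sInf
    rintro y ⟨x₁, x₂, h1, h2, h3, h4, hcase⟩
    apply sInf_le
    rcases hcase with ⟨heq, hy⟩ | ⟨hlt, hy⟩
    · have hx1 : x = x₁ := le_antisymm (heq ▸ h3) h2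
      refine ⟨Measure.dirac x, Measure.dirac.isProbabilityMeasure, ?_, myIntegrableDirac f x, ?_, ?_⟩
      · rw [Measure.dirac_apply' _ measurableSet_Icc.compl,
          Set.indicator_of_notMem (by simp [Set.mem_Icc]; exact ⟨hx.1, hx.2⟩)]
      · exact integral_dirac (fun t => t) x
      · rw [hy, integral_dirac]
    · obtain ⟨Q, hP, hc, hi, hm, hI⟩ := myTwoPoint a b f x x₁ x₂ h1 h2 h3 h4 hlt
      exact ⟨Q, hP, hc, hi, hm, by rw [hy, hI]⟩
  · -- sInf S2 ≤ cEnv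
    apply le_sInf
    rintro y ⟨Q, hP, hc, hfint, hmean, hy⟩
    have haeIcc : ∀ᵐ t ∂Q, t ∈ Set.Icc a b := by
      rw [ae_iff]
      exact hc
    have hid : Integrable (fun t : ℝ => t) Q := by
      refine Integrable.mono' (integrable_const (max |a| |b|))
        measurable_id.aestronglyMeasurable (haeIcc.mono fun t ht => ?_)
      have h3 : -|a| ≤ a := neg_abs_le a
      have h4 : b ≤ |b| := le_abs_self b
      have h5 := le_max_left |a| |b|
      have h6 := le_max_right |a| |b|
      rw [Real.norm_eq_abs, abs_le]
      exact ⟨by linarith [ht.1], by linarith [ht.2]⟩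
    rcases eq_or_lt_of_le hx.1 with hax | hax
    · -- x = a : Q is a.e. dirac at a
      have hia : Integrable (fun t => t - a) Q := hid.sub (integrable_const a)
      have hz : ∫ t, (t - a) ∂Q = 0 := by
        rw [integral_sub hid (integrable_const a), hmean, integral_const]
        simp [← hax]
      have hnn : 0 ≤ᵐ[Q] fun t => t - a := haeIcc.mono fun t ht => by
        simp only [Pi.zero_apply]; linarith [ht.1]
      have h0 : ∀ᵐ t ∂Q, t = a := by
        have := (integral_eq_zero_iff_of_nonneg_ae hnn hia).1 hz
        exact this.mono fun t ht => by simpa [sub_eq_zero] using ht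
      have hfeq : f =ᵐ[Q] fun _ => f a := h0.mono fun t ht => by rw [ht]
      have hI : ∫ t, f t ∂Q = f a := by
        rw [integral_congr_ae hfeq, integral_const]; simp
      rw [hy, hI, hax]
      exact hmfx
    rcases eq_or_lt_of_le hx.2 with hxb | hxb
    · -- x = b : Q is a.e. dirac at b
      have hia : Integrable (fun t => b - t) Q := (integrable_const b).sub hid
      have hz : ∫ t, (b - t) ∂Q = 0 := by
        rw [integral_sub (integrable_const b) hid, hmean, integral_const]
        simp [hxb]
      have hnn : 0 ≤ᵐ[Q] fun t => b - t := haeIcc.mono fun t ht => by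
        simp only [Pi.zero_apply]; linarith [ht.2]
      have h0 : ∀ᵐ t ∂Q, t = b := by
        have := (integral_eq_zero_iff_of_nonneg_ae hnn hia).1 hz
        exact this.mono fun t ht => by
          have : b - t = 0 := ht
          linarith
      have hfeq : f =ᵐ[Q] fun _ => f b := h0.mono fun t ht => by rw [ht]
      have hI : ∫ t, f t ∂Q = f b := by
        rw [integral_congr_ae hfeq, integral_const]; simp
      rw [hy, hI, ← hxb]
      exact hmfx
    -- interior case : a < x < b
    by_cases hbot : sInf S2 = ⊥
    · rw [hbot]; exact bot_le
    have htop : sInf S2 ≠ ⊤ := (lt_of_le_of_lt hmfx (EReal.coe_lt_top _)).ne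
    set r : ℝ := (sInf S2).toReal with hrdef
    have hr : ((r : ℝ) : EReal) = sInf S2 := EReal.coe_toReal htop hbot
    have hrfx : r ≤ f x := by
      rw [← EReal.coe_le_coe_iff, hr]; exact hmfx
    have hchord : ∀ u v : ℝ, a ≤ u → u ≤ x → x ≤ v → v ≤ b → u < v →
        r * (v - u) ≤ (v - x) * f u + (x - u) * f v := by
      intro u v hu hux hxv hvb huv
      have hmem : (((v - x)/(v-u) * f u + (x - u)/(v-u) * f v : ℝ) : EReal) ∈ S2 :=
        ⟨u, v, hu, hux, hxv, hvb, Or.inr ⟨huv, rfl⟩⟩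
      have h := sInf_le hmem
      rw [← hr, EReal.coe_le_coe_iff] at h
      have hvu : (0:ℝ) < v - u := by linarith
      rw [div_mul_eq_mul_div, div_mul_eq_mul_div, ← add_div, le_div_iff₀ hvu] at h
      linarith [h]
    set T : Set ℝ := (fun s => (f s - r)/(s - x)) '' Set.Ioc x b with hT
    have hTne : T.Nonempty := ⟨_, ⟨b, ⟨hxb, le_rfl⟩, rfl⟩⟩
    have hlb : ∀ u, a ≤ u → u < x → (-(f u - r))/(x - u) ∈ lowerBounds T := by
      rintro u hu hux _ ⟨s, hs, rfl⟩
      have h1 := hchord u s hu hux.le hs.1.le hs.2 (lt_trans hux hs.1)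
      rw [div_le_div_iff₀ (by linarith) (by linarith [hs.1])]
      nlinarith [h1]
    have hbdd : BddBelow T := ⟨_, hlb a le_rfl hax⟩
    set c : ℝ := sInf T with hcdef
    have hline : ∀ u, u ∈ Set.Icc a b → r + c * (u - x) ≤ f u := by
      intro u hu
      rcases lt_trichotomy u x with h | h | h
      · have h2 : (-(f u - r))/(x - u) ≤ c := le_csInf hTne (hlb u hu.1 h)
        rw [div_le_iff₀ (by linarith)] at h2
        nlinarith [h2]
      · rw [h]; simpa using hrfx
      · have h2 : c ≤ (f u - r)/(u - x) := csInf_le hbdd ⟨u, ⟨h, hu.2⟩, rfl⟩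
        rw [le_div_iff₀ (by linarith)] at h2
        linarith
    have hlint : Integrable (fun t => r + c * (t - x)) Q :=
      (integrable_const r).add ((hid.sub (integrable_const x)).const_mul c)
    have hlI : ∫ t, (r + c * (t - x)) ∂Q = r := by
      have h1 : ∫ t, (r + c * (t - x)) ∂Q = (∫ _, r ∂Q) + ∫ t, c * (t - x) ∂Q :=
        integral_add (integrable_const r) ((hid.sub (integrable_const x)).const_mul c)
      have h2 : ∫ t, (t - x) ∂Q = 0 := by
        rw [integral_sub hid (integrable_const x), hmean, integral_const]; simp
      rw [h1, integral_const, integral_const_mul, h2]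
      simp
    have hmono : r ≤ ∫ t, f t ∂Q := by
      have hae2 : ∀ᵐ t ∂Q, r + c * (t - x) ≤ f t := haeIcc.mono fun t ht => hline t ht
      calc r = ∫ t, (r + c*(t-x)) ∂Q := hlI.symm
        _ ≤ ∫ t, f t ∂Q := integral_mono_ae hlint hfint hae2
    rw [hy, ← hr]
    exact EReal.coe_le_coe_iff.2 hmono
end

section
/- Let E be a nonnegative Borel function on [a,b] with ∫ E dP ≤ 1 for all Borel probability measures P on [a,b] satisfying E_P[X] ≤ μ₀. Then there exists α ∈ [0, 1/(μ₀ - a)] such that E(x) ≤ 1 + α(x - μ₀) for all x ∈ [a,b]. -/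
open MeasureTheory Set

lemma integrable_dirac' (f : ℝ → ℝ) (x : ℝ) : Integrable f (Measure.dirac x) :=
  (integrable_const (f x)).congr (ae_eq_dirac f).symm

lemma twopoint (f : ℝ → ℝ) (x y t : ℝ) (ht0 : 0 ≤ t) (ht1 : t ≤ 1) :
    ∫ z, f z ∂(ENNReal.ofReal t • Measure.dirac x + ENNReal.ofReal (1-t) • Measure.dirac y)
      = t * f x + (1-t) * f y := by
  rw [integral_add_measure ((integrable_dirac' f x).smul_measure (by simp))
    ((integrable_dirac' f y).smul_measure (by simp)),
    integral_smul_measure, integral_smul_measure, integral_dirac, integral_dirac,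
    ENNReal.toReal_ofReal ht0, ENNReal.toReal_ofReal (by linarith)]
  simp [smul_eq_mul]

lemma twopoint_prob (x y t : ℝ) (ht0 : 0 ≤ t) (ht1 : t ≤ 1) :
    IsProbabilityMeasure (ENNReal.ofReal t • Measure.dirac x + ENNReal.ofReal (1-t) • Measure.dirac y) := by
  constructor
  simp only [Measure.add_apply, Measure.smul_apply, smul_eq_mul,
    Measure.dirac_apply_of_mem (mem_univ _), mul_one]
  rw [← ENNReal.ofReal_add ht0 (by linarith)]
  norm_num

lemma twopoint_compl (a b x y t : ℝ) (hx : x ∈ Icc a b) (hy : y ∈ Icc a b) :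
    (ENNReal.ofReal t • Measure.dirac x + ENNReal.ofReal (1-t) • Measure.dirac y) (Icc a b)ᶜ = 0 := by
  have h1 : Measure.dirac x (Icc a b)ᶜ = 0 := by
    rw [Measure.dirac_apply' _ (measurableSet_Icc.compl)]
    simp [hx]
  have h2 : Measure.dirac y (Icc a b)ᶜ = 0 := by
    rw [Measure.dirac_apply' _ (measurableSet_Icc.compl)]
    simp [hy]
  simp [Measure.add_apply, h1, h2]

theorem stmt5 (a b μ₀ : ℝ) (ha : a < μ₀) (hb : μ₀ < b)
    (E : ℝ → ℝ) (hE : Measurable E) (hnn : ∀ x ∈ Icc a b, 0 ≤ E x)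
    (hev : ∀ P : Measure ℝ, IsProbabilityMeasure P → P (Icc a b)ᶜ = 0 →
      (∫ x, x ∂P) ≤ μ₀ → (∫ x, E x ∂P) ≤ 1) :
    ∃ α : ℝ, 0 ≤ α ∧ α ≤ 1 / (μ₀ - a) ∧
      ∀ x ∈ Icc a b, E x ≤ 1 + α * (x - μ₀) := by
  have key : ∀ u ∈ Icc a b, ∀ v ∈ Icc a b, ∀ t : ℝ, 0 ≤ t → t ≤ 1 →
      t * u + (1-t) * v ≤ μ₀ → t * E u + (1-t) * E v ≤ 1 := by
    intro u hu v hv t ht0 ht1 hmean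
    have := hev _ (twopoint_prob u v t ht0 ht1) (twopoint_compl a b u v t hu hv)
      (by rw [show (fun x : ℝ => x) = id from rfl, twopoint id u v t ht0 ht1]; exact hmean)
    rwa [twopoint E u v t ht0 ht1] at this
  have hle1 : ∀ x ∈ Icc a b, x ≤ μ₀ → E x ≤ 1 := by
    intro x hx hxμ
    have := key x hx x hx 1 zero_le_one le_rfl (by linarith)
    linarith
  have pair : ∀ x ∈ Icc a b, μ₀ < x → ∀ y ∈ Icc a b, y < μ₀ →
      (E x - 1) / (x - μ₀) ≤ (1 - E y) / (μ₀ - y) := by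
    intro x hx hxμ y hy hyμ
    set t : ℝ := (μ₀ - y) / (x - y) with htdef
    have hxy : 0 < x - y := by linarith
    have ht0 : 0 ≤ t := div_nonneg (by linarith) hxy.le
    have ht1 : t ≤ 1 := by rw [htdef, div_le_one hxy]; linarith
    have h1t : 1 - t = (x - μ₀) / (x - y) := by rw [htdef]; field_simp; ring
    have e1 : t * (x - y) = μ₀ - y := by rw [htdef]; field_simp
    have e2 : (1 - t) * (x - y) = x - μ₀ := by rw [h1t]; field_simp
    have hmean : t * x + (1-t) * y = μ₀ := by nlinarith [e1, e2]
    have hk := key x hx y hy t ht0 ht1 hmean.le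
    have hk' : t * (E x - 1) ≤ (1-t) * (1 - E y) := by nlinarith [hk]
    rw [div_le_div_iff₀ (by linarith) (by linarith)]
    calc (E x - 1) * (μ₀ - y) = t * (E x - 1) * (x - y) := by rw [← e1]; ring
      _ ≤ (1-t) * (1 - E y) * (x - y) := mul_le_mul_of_nonneg_right hk' hxy.le
      _ = (1 - E y) * (x - μ₀) := by rw [← e2]; ring
  have hbound : ∀ x ∈ Icc a b, μ₀ < x → (E x - 1) / (x - μ₀) ≤ 1 / (μ₀ - a) := by
    intro x hx hxμ
    have haI : a ∈ Icc a b := ⟨le_rfl, by linarith⟩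
    refine (pair x hx hxμ a haI ha).trans ?_
    gcongr
    · linarith [hnn a haI]
  set S : Set ℝ := insert 0 ((fun x => (E x - 1) / (x - μ₀)) '' Ioc μ₀ b) with hS
  have hSne : S.Nonempty := ⟨0, mem_insert _ _⟩
  have hSbdd : ∀ z ∈ S, z ≤ 1 / (μ₀ - a) := by
    intro z hz
    rcases hz with rfl | ⟨x, hx, rfl⟩
    · exact div_nonneg zero_le_one (by linarith)
    · exact hbound x ⟨by linarith [hx.1], hx.2⟩ hx.1
  refine ⟨sSup S, le_csSup ⟨_, fun z hz => hSbdd z hz⟩ (mem_insert _ _),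
    csSup_le hSne hSbdd, ?_⟩
  intro x hx
  rcases lt_trichotomy x μ₀ with hlt | heq | hgt
  · have hsup : sSup S ≤ (1 - E x) / (μ₀ - x) := by
      apply csSup_le hSne
      intro z hz
      rcases hz with rfl | ⟨y, hy, rfl⟩
      · exact div_nonneg (by linarith [hle1 x hx hlt.le]) (by linarith)
      · exact pair y ⟨by linarith [hy.1], hy.2⟩ hy.1 x hx hlt
    rw [le_div_iff₀ (by linarith : (0:ℝ) < μ₀ - x)] at hsup
    linarith
  · subst heq
    have := hle1 x hx le_rfl
    simp only [sub_self, mul_zero, add_zero]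
    linarith
  · have hmem : (E x - 1) / (x - μ₀) ∈ S :=
      mem_insert_of_mem _ ⟨x, ⟨hgt, hx.2⟩, rfl⟩
    have hsup := le_csSup ⟨_, fun z hz => hSbdd z hz⟩ hmem
    rw [div_le_iff₀ (by linarith : (0:ℝ) < x - μ₀)] at hsup
    linarith
end

section
/- For a < μ₀ < b and μ₁ ∈ (a,b), the function α ↦ ((b-μ₁)/(b-a)) log(1 + α(a-μ₀)) + ((μ₁-a)/(b-a)) log(1 + α(b-μ₀)) is strictly concave on the interval (1/(μ₀-b), 1/(μ₀-a)) and attains its unique maximum at α* = (μ₁ - μ₀)/((μ₀-a)(b-μ₀)); moreover α* lies in [1/(μ₀-b), 1/(μ₀-a)]. -/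
open Set

private lemma concave_aux (c d : ℝ) (hc : 0 < c) (hd : d ≠ 0) (s : Set ℝ)
    (hs : Convex ℝ s) (hpos : ∀ α ∈ s, 0 < 1 + α * d) :
    StrictConcaveOn ℝ s (fun α => c * Real.log (1 + α * d)) := by
  refine ⟨hs, fun x hx y hy hxy p q hp hq hpq => ?_⟩
  have hx' : 0 < 1 + x * d := hpos x hx
  have hy' : 0 < 1 + y * d := hpos y hy
  have hne : (1 + x * d) ≠ (1 + y * d) := by
    intro h
    exact hxy (mul_right_cancel₀ hd (by linarith))
  have hlog := strictConcaveOn_log_Ioi.2 (mem_Ioi.mpr hx') (mem_Ioi.mpr hy') hne hp hq hpq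
  have heq : p • (1 + x * d) + q • (1 + y * d) = 1 + (p • x + q • y) * d := by
    simp only [smul_eq_mul]; nlinarith [hpq]
  rw [heq] at hlog
  simp only [smul_eq_mul] at *
  calc p * (c * Real.log (1 + x * d)) + q * (c * Real.log (1 + y * d))
      = c * (p * Real.log (1 + x * d) + q * Real.log (1 + y * d)) := by ring
    _ < c * Real.log (1 + (p * x + q * y) * d) := by
        exact mul_lt_mul_of_pos_left hlog hc

theorem stmt8 (a b μ₀ μ₁ : ℝ) (h1 : a < μ₀) (h2 : μ₀ < b)
    (h3 : a < μ₁) (h4 : μ₁ < b) :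
    StrictConcaveOn ℝ (Ioo (1 / (μ₀ - b)) (1 / (μ₀ - a)))
      (fun α : ℝ => ((b - μ₁) / (b - a)) * Real.log (1 + α * (a - μ₀)) +
        ((μ₁ - a) / (b - a)) * Real.log (1 + α * (b - μ₀))) ∧
    (μ₁ - μ₀) / ((μ₀ - a) * (b - μ₀)) ∈ Icc (1 / (μ₀ - b)) (1 / (μ₀ - a)) ∧
    (∀ α ∈ Ioo (1 / (μ₀ - b)) (1 / (μ₀ - a)),
      α ≠ (μ₁ - μ₀) / ((μ₀ - a) * (b - μ₀)) →
      ((b - μ₁) / (b - a)) * Real.log (1 + α * (a - μ₀)) +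
        ((μ₁ - a) / (b - a)) * Real.log (1 + α * (b - μ₀)) <
      ((b - μ₁) / (b - a)) *
          Real.log (1 + ((μ₁ - μ₀) / ((μ₀ - a) * (b - μ₀))) * (a - μ₀)) +
        ((μ₁ - a) / (b - a)) *
          Real.log (1 + ((μ₁ - μ₀) / ((μ₀ - a) * (b - μ₀))) * (b - μ₀))) := by
  set L := 1 / (μ₀ - b) with hL
  set R := 1 / (μ₀ - a) with hR
  set A := (μ₁ - μ₀) / ((μ₀ - a) * (b - μ₀)) with hA
  set f : ℝ → ℝ := fun α => ((b - μ₁) / (b - a)) * Real.log (1 + α * (a - μ₀)) +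
      ((μ₁ - a) / (b - a)) * Real.log (1 + α * (b - μ₀)) with hf
  have hba : (0:ℝ) < b - a := by linarith
  have hma : (0:ℝ) < μ₀ - a := by linarith
  have hbm : (0:ℝ) < b - μ₀ := by linarith
  have hK : (0:ℝ) < (μ₀ - a) * (b - μ₀) := mul_pos hma hbm
  have hc₁ : (0:ℝ) < (b - μ₁) / (b - a) := div_pos (by linarith) hba
  have hc₂ : (0:ℝ) < (μ₁ - a) / (b - a) := div_pos (by linarith) hba
  -- positivity of the log arguments on the interval
  have hpos₁ : ∀ α ∈ Ioo L R, 0 < 1 + α * (a - μ₀) := by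
    intro α hα
    have := hα.2
    rw [hR, lt_div_iff₀ hma] at this
    nlinarith
  have hpos₂ : ∀ α ∈ Ioo L R, 0 < 1 + α * (b - μ₀) := by
    intro α hα
    have := hα.1
    rw [hL, div_lt_iff_of_neg (by linarith : μ₀ - b < 0)] at this
    nlinarith
  -- strict concavity
  have hconc : StrictConcaveOn ℝ (Ioo L R) f := by
    have t1 := concave_aux ((b - μ₁) / (b - a)) (a - μ₀) hc₁ (by linarith) (Ioo L R)
      (convex_Ioo L R) hpos₁
    have t2 := concave_aux ((μ₁ - a) / (b - a)) (b - μ₀) hc₂ (by linarith) (Ioo L R)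
      (convex_Ioo L R) hpos₂
    exact t1.add t2
  -- A is strictly inside the interval
  have hmb : μ₀ - b ≠ 0 := by linarith
  have hALdiff : A - L = (μ₁ - a) / ((μ₀ - a) * (b - μ₀)) := by
    rw [hA, hL]
    rw [div_sub_div _ _ hK.ne' hmb, div_eq_div_iff (by positivity) hK.ne']
    ring
  have hRAdiff : R - A = (b - μ₁) / ((μ₀ - a) * (b - μ₀)) := by
    rw [hA, hR]
    rw [div_sub_div _ _ hma.ne' hK.ne', div_eq_div_iff (by positivity) hK.ne']
    ring
  have hLA : L < A := by
    have := div_pos (by linarith : (0:ℝ) < μ₁ - a) hK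
    linarith [hALdiff ▸ this]
  have hAR : A < R := by
    have := div_pos (by linarith : (0:ℝ) < b - μ₁) hK
    linarith [hRAdiff ▸ this]
  have hAmem : A ∈ Ioo L R := ⟨hLA, hAR⟩
  refine ⟨hconc, Ioo_subset_Icc_self hAmem, ?_⟩
  -- derivative
  have hderiv : ∀ z ∈ Ioo L R, HasDerivAt f
      (((μ₁ - μ₀) - z * ((μ₀ - a) * (b - μ₀))) /
        ((1 + z * (a - μ₀)) * (1 + z * (b - μ₀)))) z := by
    intro z hz
    have hP := hpos₁ z hz
    have hQ := hpos₂ z hz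
    have a1 : HasDerivAt (fun α : ℝ => 1 + α * (a - μ₀)) (a - μ₀) z := by
      simpa using (hasDerivAt_mul_const (a - μ₀)).const_add 1
    have a2 : HasDerivAt (fun α : ℝ => 1 + α * (b - μ₀)) (b - μ₀) z := by
      simpa using (hasDerivAt_mul_const (b - μ₀)).const_add 1
    have l1 := (a1.log hP.ne').const_mul ((b - μ₁) / (b - a))
    have l2 := (a2.log hQ.ne').const_mul ((μ₁ - a) / (b - a))
    have := l1.add l2
    refine this.congr_deriv ?_
    have hP' := hP.ne'
    have hQ' := hQ.ne'
    have hba' := hba.ne'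
    generalize hPd : 1 + z * (a - μ₀) = P at hP' ⊢
    generalize hQd : 1 + z * (b - μ₀) = Q at hQ' ⊢
    field_simp
    rw [← hPd, ← hQd]
    ring
  intro α hα hne
  rcases lt_or_gt_of_ne hne with hlt | hgt
  · -- α < A : f strictly mono on Icc α A
    have hsub : Icc α A ⊆ Ioo L R := fun z hz => ⟨lt_of_lt_of_le hα.1 hz.1, lt_of_le_of_lt hz.2 hAR⟩
    have hcont : ContinuousOn f (Icc α A) := fun z hz =>
      ((hderiv z (hsub hz)).continuousAt).continuousWithinAt
    have hmono : StrictMonoOn f (Icc α A) := by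
      apply strictMonoOn_of_deriv_pos (convex_Icc α A) hcont
      intro z hz
      rw [interior_Icc] at hz
      have hz' : z ∈ Ioo L R := hsub ⟨hz.1.le, hz.2.le⟩
      rw [(hderiv z hz').deriv]
      apply div_pos
      · have : z * ((μ₀ - a) * (b - μ₀)) < μ₁ - μ₀ := by
          have := hz.2
          rw [hA, lt_div_iff₀ hK] at this
          linarith
        linarith
      · exact mul_pos (hpos₁ z hz') (hpos₂ z hz')
    exact hmono (left_mem_Icc.mpr hlt.le) (right_mem_Icc.mpr hlt.le) hlt
  · -- A < α : f strictly anti on Icc A α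
    have hsub : Icc A α ⊆ Ioo L R := fun z hz => ⟨lt_of_lt_of_le hLA hz.1, lt_of_le_of_lt hz.2 hα.2⟩
    have hcont : ContinuousOn f (Icc A α) := fun z hz =>
      ((hderiv z (hsub hz)).continuousAt).continuousWithinAt
    have hanti : StrictAntiOn f (Icc A α) := by
      apply strictAntiOn_of_deriv_neg (convex_Icc A α) hcont
      intro z hz
      rw [interior_Icc] at hz
      have hz' : z ∈ Ioo L R := hsub ⟨hz.1.le, hz.2.le⟩
      rw [(hderiv z hz').deriv]
      apply div_neg_of_neg_of_pos
      · have : μ₁ - μ₀ < z * ((μ₀ - a) * (b - μ₀)) := by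
          have := hz.1
          rw [hA, div_lt_iff₀ hK] at this
          linarith
        linarith
      · exact mul_pos (hpos₁ z hz') (hpos₂ z hz')
    exact hanti (left_mem_Icc.mpr hgt.le) (right_mem_Icc.mpr hgt.le) hgt
end

section
/- Let a < μ₀ < μ₁ < b, α_max = 1/(μ₀-a), α_GW = (μ₁-μ₀)/((μ₀-a)(b-μ₀)). Then there exists a unique α* ∈ (α_GW, α_max) such that F_{α*, α_max}(μ₁) = G_{α*, α_GW}(μ₁), where F_{α,β}(x) = log((1+α(x-μ₀))/(1+β(x-μ₀))) and G_{α,β}(x) = ((b-x)/(b-a)) F_{α,β}(a) + ((x-a)/(b-a)) F_{α,β}(b). -/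
open Set

/-- `F_{α,β}(x) = log((1 + α(x-μ₀)) / (1 + β(x-μ₀)))`. -/
noncomputable def Fab (μ₀ α β x : ℝ) : ℝ :=
  Real.log (1 + α * (x - μ₀)) - Real.log (1 + β * (x - μ₀))

/-- `G_{α,β}`: affine interpolation of `F_{α,β}` between its values at `a` and `b`. -/
noncomputable def Gab (a b μ₀ α β x : ℝ) : ℝ :=
  ((b - x) / (b - a)) * Fab μ₀ α β a + ((x - a) / (b - a)) * Fab μ₀ α β b

section Aux

open Filter Topology

variable {a b μ₀ μ₁ : ℝ}

/-- The difference function whose zero we seek. -/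
noncomputable def Hfun (a b μ₀ μ₁ α : ℝ) : ℝ :=
  Fab μ₀ α (1 / (μ₀ - a)) μ₁ - Gab a b μ₀ α ((μ₁ - μ₀) / ((μ₀ - a) * (b - μ₀))) μ₁

lemma Hfun_hasDerivAt {α : ℝ}
    (hA : 1 + α * (μ₁ - μ₀) ≠ 0) (hB : 1 + α * (a - μ₀) ≠ 0) (hC : 1 + α * (b - μ₀) ≠ 0) :
    HasDerivAt (Hfun a b μ₀ μ₁)
      ((μ₁ - μ₀) / (1 + α * (μ₁ - μ₀)) -
        ((b - μ₁) / (b - a) * ((a - μ₀) / (1 + α * (a - μ₀))) +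
          (μ₁ - a) / (b - a) * ((b - μ₀) / (1 + α * (b - μ₀))))) α := by
  have l1 : HasDerivAt (fun x : ℝ => 1 + x * (μ₁ - μ₀)) (μ₁ - μ₀) α := by
    simpa using (hasDerivAt_mul_const (μ₁ - μ₀)).const_add 1
  have l2 : HasDerivAt (fun x : ℝ => 1 + x * (a - μ₀)) (a - μ₀) α := by
    simpa using (hasDerivAt_mul_const (a - μ₀)).const_add 1
  have l3 : HasDerivAt (fun x : ℝ => 1 + x * (b - μ₀)) (b - μ₀) α := by
    simpa using (hasDerivAt_mul_const (b - μ₀)).const_add 1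
  have L1 := l1.log hA
  have L2 := l2.log hB
  have L3 := l3.log hC
  have :=
    ((L1.sub_const (Real.log (1 + 1 / (μ₀ - a) * (μ₁ - μ₀)))).sub
      (((L2.sub_const (Real.log (1 + (μ₁ - μ₀) / ((μ₀ - a) * (b - μ₀)) * (a - μ₀)))).const_mul
          ((b - μ₁) / (b - a))).add
        ((L3.sub_const (Real.log (1 + (μ₁ - μ₀) / ((μ₀ - a) * (b - μ₀)) * (b - μ₀)))).const_mul
          ((μ₁ - a) / (b - a)))))
  have heq : Hfun a b μ₀ μ₁ = fun x =>
      (Real.log (1 + x * (μ₁ - μ₀)) - Real.log (1 + 1 / (μ₀ - a) * (μ₁ - μ₀))) -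
        ((b - μ₁) / (b - a) *
            (Real.log (1 + x * (a - μ₀)) -
              Real.log (1 + (μ₁ - μ₀) / ((μ₀ - a) * (b - μ₀)) * (a - μ₀))) +
          (μ₁ - a) / (b - a) *
            (Real.log (1 + x * (b - μ₀)) -
              Real.log (1 + (μ₁ - μ₀) / ((μ₀ - a) * (b - μ₀)) * (b - μ₀)))) := by
    funext x
    simp only [Hfun, Fab, Gab]
  rw [heq]
  convert this using 1
  all_goals rfl

end Aux

theorem stmt10 (a b μ₀ μ₁ : ℝ) (h1 : a < μ₀) (h2 : μ₀ < μ₁) (h3 : μ₁ < b) :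
    ∃! α : ℝ,
      α ∈ Ioo ((μ₁ - μ₀) / ((μ₀ - a) * (b - μ₀))) (1 / (μ₀ - a)) ∧
      Fab μ₀ α (1 / (μ₀ - a)) μ₁ =
        Gab a b μ₀ α ((μ₁ - μ₀) / ((μ₀ - a) * (b - μ₀))) μ₁ := by
  have hu : (0:ℝ) < μ₀ - a := by linarith
  have hv : (0:ℝ) < b - μ₀ := by linarith
  have hd : (0:ℝ) < μ₁ - μ₀ := by linarith
  have hba : (0:ℝ) < b - a := by linarith
  set αg := (μ₁ - μ₀) / ((μ₀ - a) * (b - μ₀)) with hαg_def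
  set αm := 1 / (μ₀ - a) with hαm_def
  have hαg_pos : 0 < αg := div_pos hd (mul_pos hu hv)
  have hαm_pos : 0 < αm := by positivity
  have hαgm : αg < αm := by
    rw [hαg_def, hαm_def, div_lt_div_iff₀ (mul_pos hu hv) hu]
    nlinarith
  have posA : ∀ {α : ℝ}, αg ≤ α → 0 < 1 + α * (μ₁ - μ₀) := by
    intro α h
    nlinarith [mul_pos (lt_of_lt_of_le hαg_pos h) hd]
  have posB : ∀ {α : ℝ}, α < αm → 0 < 1 + α * (a - μ₀) := by
    intro α h
    rw [hαm_def] at h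
    have := (lt_div_iff₀ hu).mp h
    nlinarith
  have posC : ∀ {α : ℝ}, αg ≤ α → 0 < 1 + α * (b - μ₀) := by
    intro α h
    nlinarith [mul_pos (lt_of_lt_of_le hαg_pos h) hv]
  have hder : ∀ x ∈ Ico αg αm, HasDerivAt (Hfun a b μ₀ μ₁)
      ((μ₁ - μ₀) / (1 + x * (μ₁ - μ₀)) -
        ((b - μ₁) / (b - a) * ((a - μ₀) / (1 + x * (a - μ₀))) +
          (μ₁ - a) / (b - a) * ((b - μ₀) / (1 + x * (b - μ₀))))) x := by
    intro x hx
    exact Hfun_hasDerivAt (posA hx.1).ne' (posB hx.2).ne' (posC hx.1).ne'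
  -- strict monotonicity
  have hmono : StrictMonoOn (Hfun a b μ₀ μ₁) (Ico αg αm) := by
    apply strictMonoOn_of_deriv_pos (convex_Ico _ _)
    · intro x hx
      exact (hder x hx).continuousAt.continuousWithinAt
    · intro x hx
      rw [interior_Ico] at hx
      rw [(hder x (Ioo_subset_Ico_self hx)).deriv]
      have hA := posA hx.1.le
      have hB := posB hx.2
      have hC := posC hx.1.le
      have t1 : 0 < (μ₁ - μ₀) / (1 + x * (μ₁ - μ₀)) := div_pos hd hA
      have hkey : μ₁ - μ₀ < x * ((μ₀ - a) * (b - μ₀)) := by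
        have := hx.1
        rw [hαg_def] at this
        exact (div_lt_iff₀ (mul_pos hu hv)).mp this
      have t2 : (μ₁ - a) / (b - a) * ((b - μ₀) / (1 + x * (b - μ₀))) ≤
          (b - μ₁) / (b - a) * ((μ₀ - a) / (1 + x * (a - μ₀))) := by
        rw [div_mul_div_comm, div_mul_div_comm,
          div_le_div_iff₀ (by positivity) (by positivity)]
        nlinarith [mul_pos (mul_pos hba hba) (sub_pos.2 hkey)]
      have t3 : (b - μ₁) / (b - a) * ((a - μ₀) / (1 + x * (a - μ₀))) =
          -((b - μ₁) / (b - a) * ((μ₀ - a) / (1 + x * (a - μ₀)))) := by ring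
      linarith [t1, t2, t3.le, t3.ge]
  -- value at αg is negative
  have hHαg : Hfun a b μ₀ μ₁ αg < 0 := by
    have hval : Hfun a b μ₀ μ₁ αg =
        Real.log (1 + αg * (μ₁ - μ₀)) - Real.log (1 + αm * (μ₁ - μ₀)) := by
      simp only [Hfun, Fab, Gab, ← hαg_def, ← hαm_def, sub_self, mul_zero, add_zero, sub_zero]
    rw [hval]
    have : 1 + αg * (μ₁ - μ₀) < 1 + αm * (μ₁ - μ₀) := by nlinarith
    linarith [Real.log_lt_log (posA le_rfl) this]
  -- Hfun tends to +∞ as α → αm from the left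
  have hsplit : Hfun a b μ₀ μ₁ = fun α =>
      (-((b - μ₁) / (b - a))) * Real.log (1 + α * (a - μ₀)) +
      (Real.log (1 + α * (μ₁ - μ₀)) - Real.log (1 + αm * (μ₁ - μ₀)) +
        (b - μ₁) / (b - a) * Real.log (1 + αg * (a - μ₀)) -
        (μ₁ - a) / (b - a) *
          (Real.log (1 + α * (b - μ₀)) - Real.log (1 + αg * (b - μ₀)))) := by
    funext α
    simp only [Hfun, Fab, Gab, ← hαg_def, ← hαm_def]
    ring
  have hlim0 : Filter.Tendsto (fun α : ℝ => 1 + α * (a - μ₀)) (nhdsWithin αm (Iio αm))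
      (nhdsWithin 0 (Ioi 0)) := by
    apply Filter.Tendsto.inf
    · have hc : Continuous (fun α : ℝ => 1 + α * (a - μ₀)) := by continuity
      have := hc.tendsto αm
      have hval : 1 + αm * (a - μ₀) = 0 := by
        rw [hαm_def]; field_simp; ring
      rwa [hval] at this
    · rw [Filter.tendsto_principal_principal]
      exact fun α hα => posB hα
  have hlog : Filter.Tendsto (fun α : ℝ => Real.log (1 + α * (a - μ₀)))
      (nhdsWithin αm (Iio αm)) Filter.atBot :=
    Real.tendsto_log_nhdsGT_zero.comp hlim0
  have hterm : Filter.Tendsto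
      (fun α : ℝ => (-((b - μ₁) / (b - a))) * Real.log (1 + α * (a - μ₀)))
      (nhdsWithin αm (Iio αm)) Filter.atTop := by
    have hneg : -((b - μ₁) / (b - a)) < 0 := by
      have : (0:ℝ) < (b - μ₁) / (b - a) := div_pos (by linarith) hba
      linarith
    exact (Filter.tendsto_const_mul_atTop_of_neg hneg).2 hlog
  obtain ⟨L, hRcont⟩ : ∃ L : ℝ, Filter.Tendsto
      (fun α : ℝ => Real.log (1 + α * (μ₁ - μ₀)) - Real.log (1 + αm * (μ₁ - μ₀)) +
        (b - μ₁) / (b - a) * Real.log (1 + αg * (a - μ₀)) -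
        (μ₁ - a) / (b - a) *
          (Real.log (1 + α * (b - μ₀)) - Real.log (1 + αg * (b - μ₀))))
      (nhdsWithin αm (Iio αm)) (nhds L) := by
    have c1 : ContinuousAt (fun α : ℝ => Real.log (1 + α * (μ₁ - μ₀))) αm :=
      ContinuousAt.log (by fun_prop) (posA hαgm.le).ne'
    have c3 : ContinuousAt (fun α : ℝ => Real.log (1 + α * (b - μ₀))) αm :=
      ContinuousAt.log (by fun_prop) (posC hαgm.le).ne'
    have call : ContinuousAt (fun α : ℝ =>
        Real.log (1 + α * (μ₁ - μ₀)) - Real.log (1 + αm * (μ₁ - μ₀)) +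
        (b - μ₁) / (b - a) * Real.log (1 + αg * (a - μ₀)) -
        (μ₁ - a) / (b - a) *
          (Real.log (1 + α * (b - μ₀)) - Real.log (1 + αg * (b - μ₀)))) αm :=
      (((c1.sub continuousAt_const).add continuousAt_const).sub
        (continuousAt_const.mul (c3.sub continuousAt_const)))
    exact ⟨_, call.continuousWithinAt⟩
  have hHtop : Filter.Tendsto (Hfun a b μ₀ μ₁) (nhdsWithin αm (Iio αm)) Filter.atTop := by
    rw [hsplit]
    refine Filter.tendsto_atTop_mono' _ ?_
      (Filter.tendsto_atTop_add_const_right _ (L - 1) hterm)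
    filter_upwards [hRcont.eventually (eventually_ge_nhds (show L - 1 < L by linarith))]
      with α hα
    exact add_le_add_right hα _
  -- find a point where Hfun is positive
  haveI : (nhdsWithin αm (Iio αm)).NeBot := nhdsWithin_Iio_self_neBot' ⟨αg, hαgm⟩
  have hev2 : ∀ᶠ α in nhdsWithin αm (Iio αm), α ∈ Ioo αg αm := by
    filter_upwards [mem_nhdsWithin_of_mem_nhds (Ioi_mem_nhds hαgm), self_mem_nhdsWithin]
      with α ha hb
    exact ⟨ha, hb⟩
  obtain ⟨w, hwpos, hwmem⟩ := ((hHtop.eventually_gt_atTop 0).and hev2).exists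
  -- IVT on [αg, w]
  have hcont : ContinuousOn (Hfun a b μ₀ μ₁) (Icc αg w) := fun x hx =>
    (hder x ⟨hx.1, lt_of_le_of_lt hx.2 hwmem.2⟩).continuousAt.continuousWithinAt
  obtain ⟨α₀, hα₀, hH0⟩ := intermediate_value_Ioo hwmem.1.le hcont ⟨hHαg, hwpos⟩
  have hα₀mem : α₀ ∈ Ioo αg αm := ⟨hα₀.1, hα₀.2.trans hwmem.2⟩
  refine ⟨α₀, ⟨hα₀mem, ?_⟩, ?_⟩
  · have h0 : Fab μ₀ α₀ αm μ₁ - Gab a b μ₀ α₀ αg μ₁ = 0 := hH0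
    exact sub_eq_zero.mp h0
  · rintro y ⟨hy, hyeq⟩
    have hy0 : Hfun a b μ₀ μ₁ y = 0 := by
      show Fab μ₀ y αm μ₁ - Gab a b μ₀ y αg μ₁ = 0
      rw [sub_eq_zero]
      exact hyeq
    exact hmono.injOn ⟨hy.1.le, hy.2⟩ ⟨hα₀mem.1.le, hα₀mem.2⟩ (by rw [hy0, hH0])
end

section
/- Let a < μ₀ < b and set r = ((μ₁-a)/(b-a))^{(μ₁-a)/(b-μ₁)} for μ₁ ∈ [μ₀, b). Then the number α̃ = ((b-μ₀) - ((μ₀-a)(b-μ₁)/(b-a)) r) / ((μ₀-a)(b-μ₀)(1 + ((b-μ₁)/(b-a)) r)) satisfies the equation F_{α̃, α_max}(b) = G_{α̃, α_GW}(μ₁), where α_max = 1/(μ₀-a), α_GW = (μ₁-μ₀)/((μ₀-a)(b-μ₀)), F_{α,β}(x) = log((1+α(x-μ₀))/(1+β(x-μ₀))), and G_{α,β}(x) = ((b-x)/(b-a)) F_{α,β}(a) + ((x-a)/(b-a)) F_{α,β}(b). -/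
open Set

theorem stmt13 (a b μ₀ μ₁ : ℝ) (h1 : a < μ₀) (h2 : μ₀ < b)
    (h3 : μ₀ ≤ μ₁) (h4 : μ₁ < b) :
    Fab μ₀
        (((b - μ₀) - ((μ₀ - a) * (b - μ₁) / (b - a)) *
            (((μ₁ - a) / (b - a)) ^ ((μ₁ - a) / (b - μ₁)))) /
          ((μ₀ - a) * (b - μ₀) *
            (1 + ((b - μ₁) / (b - a)) * (((μ₁ - a) / (b - a)) ^ ((μ₁ - a) / (b - μ₁))))))
        (1 / (μ₀ - a)) b =
      Gab a b μ₀
        (((b - μ₀) - ((μ₀ - a) * (b - μ₁) / (b - a)) *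
            (((μ₁ - a) / (b - a)) ^ ((μ₁ - a) / (b - μ₁)))) /
          ((μ₀ - a) * (b - μ₀) *
            (1 + ((b - μ₁) / (b - a)) * (((μ₁ - a) / (b - a)) ^ ((μ₁ - a) / (b - μ₁))))))
        ((μ₁ - μ₀) / ((μ₀ - a) * (b - μ₀))) μ₁ := by
  have hp : (0:ℝ) < μ₀ - a := by linarith
  have hq : (0:ℝ) < b - μ₀ := by linarith
  have hs : (0:ℝ) < b - μ₁ := by linarith
  have ht : (0:ℝ) < μ₁ - a := by linarith
  have hL : (0:ℝ) < b - a := by linarith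
  set r : ℝ := ((μ₁ - a) / (b - a)) ^ ((μ₁ - a) / (b - μ₁)) with hrdef
  have hr : 0 < r := Real.rpow_pos_of_pos (div_pos ht hL) _
  set c : ℝ := ((b - μ₁) / (b - a)) * r with hcdef
  have hc : 0 < c := mul_pos (div_pos hs hL) hr
  have h1c : (0:ℝ) < 1 + c := by linarith
  set α : ℝ := ((b - μ₀) - (μ₀ - a) * (b - μ₁) / (b - a) * r) /
      ((μ₀ - a) * (b - μ₀) * (1 + c)) with hαdef
  have e1 : 1 + α * (b - μ₀) = (b - a) / ((μ₀ - a) * (1 + c)) := by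
    rw [hαdef, hcdef]
    field_simp
    ring
  have e2 : 1 + 1 / (μ₀ - a) * (b - μ₀) = (b - a) / (μ₀ - a) := by
    field_simp
    ring
  have e3 : 1 + α * (a - μ₀) = c * (b - a) / ((b - μ₀) * (1 + c)) := by
    rw [hαdef, hcdef]
    field_simp
    ring
  have e4 : 1 + (μ₁ - μ₀) / ((μ₀ - a) * (b - μ₀)) * (a - μ₀) = (b - μ₁) / (b - μ₀) := by
    field_simp
    ring
  have e5 : 1 + (μ₁ - μ₀) / ((μ₀ - a) * (b - μ₀)) * (b - μ₀) = (μ₁ - a) / (μ₀ - a) := by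
    field_simp
    ring
  have lc : Real.log c = Real.log (b - μ₁) - Real.log (b - a) +
      (μ₁ - a) / (b - μ₁) * (Real.log (μ₁ - a) - Real.log (b - a)) := by
    rw [hcdef, Real.log_mul (by positivity) hr.ne', hrdef,
      Real.log_rpow (div_pos ht hL), Real.log_div hs.ne' hL.ne',
      Real.log_div ht.ne' hL.ne']
  have l1 : Real.log ((b - a) / ((μ₀ - a) * (1 + c))) =
      Real.log (b - a) - (Real.log (μ₀ - a) + Real.log (1 + c)) := by
    rw [Real.log_div hL.ne' (by positivity), Real.log_mul hp.ne' h1c.ne']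
  have l2 : Real.log ((b - a) / (μ₀ - a)) = Real.log (b - a) - Real.log (μ₀ - a) :=
    Real.log_div hL.ne' hp.ne'
  have l3 : Real.log (c * (b - a) / ((b - μ₀) * (1 + c))) =
      Real.log c + Real.log (b - a) - (Real.log (b - μ₀) + Real.log (1 + c)) := by
    rw [Real.log_div (by positivity) (by positivity), Real.log_mul hc.ne' hL.ne',
      Real.log_mul hq.ne' h1c.ne']
  have l4 : Real.log ((b - μ₁) / (b - μ₀)) = Real.log (b - μ₁) - Real.log (b - μ₀) :=
    Real.log_div hs.ne' hq.ne'
  have l5 : Real.log ((μ₁ - a) / (μ₀ - a)) = Real.log (μ₁ - a) - Real.log (μ₀ - a) :=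
    Real.log_div ht.ne' hp.ne'
  simp only [Fab, Gab, e1, e2, e3, e4, e5, l1, l2, l3, l4, l5, lc]
  field_simp
  ring
end

section
/- Let a < μ₀ < b, α* > 0 in (0, 1/(μ₀-a)], and β ∈ [1/(μ₀-b), 0]. Fix x₁, x₂ with a ≤ x₁ ≤ μ₁ ≤ x₂ ≤ b and θ = (x₂-μ₁)/(x₂-x₁). Then the function L(β) = θ F_{α*,β}(x₁) + (1-θ) F_{α*,β}(x₂), where F_{α,β}(x) = log((1+α(x-μ₀))/(1+β(x-μ₀))), is non-increasing in β on [1/(μ₀-b), 0], for any μ₁ ∈ [μ₀, b]. -/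
open Set

/-- Extended-real logarithm with the convention `log x = -∞` for `x ≤ 0`. -/
noncomputable def logE (x : ℝ) : EReal :=
  if x ≤ 0 then ⊥ else ((Real.log x : ℝ) : EReal)

lemma logE_of_pos {x : ℝ} (hx : 0 < x) : logE x = ((Real.log x : ℝ) : EReal) :=
  if_neg (not_le.2 hx)

lemma logE_of_nonpos {x : ℝ} (hx : x ≤ 0) : logE x = ⊥ := if_pos hx

/-- positivity of denominators -/
lemma Dpos (μ₀ b β w : ℝ) (hw : w < b - μ₀)
    (hβ1 : 1 / (μ₀ - b) ≤ β) (hβ2 : β ≤ 0) (hb : μ₀ < b) : 0 < 1 + β * w := by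
  have hβb : β * (μ₀ - b) ≤ 1 := by
    rwa [div_le_iff_of_neg (by linarith)] at hβ1
  rcases le_or_gt w 0 with h | h
  · nlinarith [mul_nonneg (neg_nonneg.2 hβ2) (neg_nonneg.2 h)]
  · rcases eq_or_lt_of_le hβ2 with rfl | hβlt
    · norm_num
    · nlinarith [mul_pos (neg_pos.2 hβlt) (sub_pos.2 hw)]

lemma Dnonneg (μ₀ b β w : ℝ) (hw : w ≤ b - μ₀)
    (hβ1 : 1 / (μ₀ - b) ≤ β) (hβ2 : β ≤ 0) (hb : μ₀ < b) : 0 ≤ 1 + β * w := by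
  have hβb : β * (μ₀ - b) ≤ 1 := by
    rwa [div_le_iff_of_neg (by linarith)] at hβ1
  nlinarith [mul_nonneg (neg_nonneg.2 hβ2) (sub_nonneg.2 hw)]

lemma keyineq (μ₀ μ₁ x₁ x₂ β : ℝ) (h2 : μ₀ ≤ μ₁) (hx₁μ : x₁ ≤ μ₁) (hμx₂ : μ₁ ≤ x₂)
    (hβ : β ≤ 0) (hD1 : 0 ≤ 1 + β * (x₁ - μ₀)) (hD2 : 0 ≤ 1 + β * (x₂ - μ₀)) :
    0 ≤ (x₂ - μ₁) * (x₁ - μ₀) * (1 + β * (x₂ - μ₀)) +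
        (μ₁ - x₁) * (x₂ - μ₀) * (1 + β * (x₁ - μ₀)) := by
  rcases le_or_gt 0 (x₁ - μ₀) with h | h
  · have t1 : 0 ≤ (x₂ - μ₁) * (x₁ - μ₀) * (1 + β * (x₂ - μ₀)) :=
      mul_nonneg (mul_nonneg (by linarith) h) hD2
    have t2 : 0 ≤ (μ₁ - x₁) * (x₂ - μ₀) * (1 + β * (x₁ - μ₀)) :=
      mul_nonneg (mul_nonneg (by linarith) (by linarith)) hD1
    linarith
  · have hA : 0 ≤ μ₀ - x₁ := by linarith
    have e1 : (x₂ - μ₁) * (μ₀ - x₁) * (1 + β * (x₂ - μ₀)) ≤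
        (x₂ - μ₁) * (μ₀ - x₁) * (1 + β * (x₁ - μ₀)) := by
      apply mul_le_mul_of_nonneg_left ?_ (mul_nonneg (by linarith) hA)
      nlinarith [mul_nonneg (neg_nonneg.2 hβ) (by linarith : (0:ℝ) ≤ x₂ - x₁)]
    have e2 : (x₂ - μ₁) * (μ₀ - x₁) * (1 + β * (x₁ - μ₀)) ≤
        (μ₁ - x₁) * (x₂ - μ₀) * (1 + β * (x₁ - μ₀)) := by
      apply mul_le_mul_of_nonneg_right ?_ hD1
      nlinarith [mul_le_mul (show x₂ - μ₁ ≤ x₂ - μ₀ by linarith)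
        (show μ₀ - x₁ ≤ μ₁ - x₁ by linarith) hA (show (0:ℝ) ≤ x₂ - μ₀ by linarith)]
    nlinarith [e1, e2]

lemma realmono (μ₀ μ₁ x₁ x₂ β β' : ℝ) (h2 : μ₀ ≤ μ₁) (hx₁μ : x₁ ≤ μ₁) (hμx₂ : μ₁ ≤ x₂)
    (hx : x₁ < x₂) (hβ'2 : β' ≤ 0) (hle : β ≤ β')
    (hD1 : 0 < 1 + β * (x₁ - μ₀)) (hD2 : 0 < 1 + β * (x₂ - μ₀))
    (hD1' : 0 < 1 + β' * (x₁ - μ₀)) (hD2' : 0 < 1 + β' * (x₂ - μ₀)) :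
    (x₂ - μ₁) / (x₂ - x₁) * Real.log (1 + β * (x₁ - μ₀)) +
      (1 - (x₂ - μ₁) / (x₂ - x₁)) * Real.log (1 + β * (x₂ - μ₀)) ≤
    (x₂ - μ₁) / (x₂ - x₁) * Real.log (1 + β' * (x₁ - μ₀)) +
      (1 - (x₂ - μ₁) / (x₂ - x₁)) * Real.log (1 + β' * (x₂ - μ₀)) := by
  set θ := (x₂ - μ₁) / (x₂ - x₁) with hθdef
  have hx' : (0:ℝ) < x₂ - x₁ := by linarith
  have hθ0 : 0 ≤ θ := div_nonneg (by linarith) hx'.le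
  have hθ1 : θ ≤ 1 := (div_le_one hx').2 (by linarith)
  have h1θ : 0 ≤ 1 - θ := by linarith
  have l1 : Real.log (1 + β * (x₁ - μ₀)) - Real.log (1 + β' * (x₁ - μ₀)) ≤
      (β - β') * ((x₁ - μ₀) / (1 + β' * (x₁ - μ₀))) := by
    have h := Real.log_le_sub_one_of_pos (div_pos hD1 hD1')
    rw [Real.log_div hD1.ne' hD1'.ne'] at h
    have e : (1 + β * (x₁ - μ₀)) / (1 + β' * (x₁ - μ₀)) - 1 =
        (β - β') * ((x₁ - μ₀) / (1 + β' * (x₁ - μ₀))) := by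
      field_simp [hD1'.ne', (by rw [mul_comm]; exact hD1'.ne' : 1 + (x₁ - μ₀) * β' ≠ 0)]
      ring
    linarith [e ▸ h]
  have l2 : Real.log (1 + β * (x₂ - μ₀)) - Real.log (1 + β' * (x₂ - μ₀)) ≤
      (β - β') * ((x₂ - μ₀) / (1 + β' * (x₂ - μ₀))) := by
    have h := Real.log_le_sub_one_of_pos (div_pos hD2 hD2')
    rw [Real.log_div hD2.ne' hD2'.ne'] at h
    have e : (1 + β * (x₂ - μ₀)) / (1 + β' * (x₂ - μ₀)) - 1 =
        (β - β') * ((x₂ - μ₀) / (1 + β' * (x₂ - μ₀))) := by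
      field_simp [hD2'.ne', (by rw [mul_comm]; exact hD2'.ne' : 1 + (x₂ - μ₀) * β' ≠ 0)]
      ring
    linarith [e ▸ h]
  have key := keyineq μ₀ μ₁ x₁ x₂ β' h2 hx₁μ hμx₂ hβ'2 hD1'.le hD2'.le
  have hS : 0 ≤ θ * ((x₁ - μ₀) / (1 + β' * (x₁ - μ₀))) +
      (1 - θ) * ((x₂ - μ₀) / (1 + β' * (x₂ - μ₀))) := by
    have heq : θ * ((x₁ - μ₀) / (1 + β' * (x₁ - μ₀))) +
        (1 - θ) * ((x₂ - μ₀) / (1 + β' * (x₂ - μ₀))) =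
        ((x₂ - μ₁) * (x₁ - μ₀) * (1 + β' * (x₂ - μ₀)) +
          (μ₁ - x₁) * (x₂ - μ₀) * (1 + β' * (x₁ - μ₀))) /
          ((x₂ - x₁) * ((1 + β' * (x₁ - μ₀)) * (1 + β' * (x₂ - μ₀)))) := by
      rw [hθdef]
      field_simp [hx'.ne', hD1'.ne', hD2'.ne', (by rw [mul_comm]; exact hD1'.ne' : 1 + (x₁ - μ₀) * β' ≠ 0), (by rw [mul_comm]; exact hD2'.ne' : 1 + (x₂ - μ₀) * β' ≠ 0)]
      ring
    rw [heq]
    exact div_nonneg key (by positivity)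
  nlinarith [mul_le_mul_of_nonneg_left l1 hθ0, mul_le_mul_of_nonneg_left l2 h1θ,
    mul_nonneg (sub_nonneg.2 hle) hS]

set_option maxHeartbeats 1000000 in
theorem stmt14 (a b μ₀ μ₁ αs x₁ x₂ : ℝ) (h1 : a < μ₀) (h2 : μ₀ ≤ μ₁) (h3 : μ₁ < b)
    (hαs0 : 0 < αs) (hαs1 : αs ≤ 1 / (μ₀ - a))
    (hx₁ : a ≤ x₁) (hx₁μ : x₁ ≤ μ₁) (hμx₂ : μ₁ ≤ x₂) (hx₂ : x₂ ≤ b) (hx : x₁ < x₂) :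
    AntitoneOn (fun β : ℝ =>
      ((((x₂ - μ₁) / (x₂ - x₁)) : ℝ) : EReal) *
        (logE (1 + αs * (x₁ - μ₀)) - logE (1 + β * (x₁ - μ₀))) +
      (((1 - (x₂ - μ₁) / (x₂ - x₁)) : ℝ) : EReal) *
        (logE (1 + αs * (x₂ - μ₀)) - logE (1 + β * (x₂ - μ₀))))
      (Icc (1 / (μ₀ - b)) 0) := by
  intro β hβ β' hβ' hle
  obtain ⟨hβ1, hβ2⟩ := hβ
  obtain ⟨hβ'1, hβ'2⟩ := hβ'
  dsimp only
  have hb : μ₀ < b := lt_of_le_of_lt h2 h3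
  have hx' : (0:ℝ) < x₂ - x₁ := by linarith
  have hv : (0:ℝ) ≤ x₂ - μ₀ := by linarith
  have hθ0 : 0 ≤ (x₂ - μ₁) / (x₂ - x₁) := div_nonneg (by linarith) hx'.le
  have hθ1 : (x₂ - μ₁) / (x₂ - x₁) ≤ 1 := (div_le_one hx').2 (by linarith)
  have hD1β : 0 < 1 + β * (x₁ - μ₀) := Dpos μ₀ b β _ (by linarith) hβ1 hβ2 hb
  have hD1β' : 0 < 1 + β' * (x₁ - μ₀) := Dpos μ₀ b β' _ (by linarith) hβ'1 hβ'2 hb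
  have hD2βnn : 0 ≤ 1 + β * (x₂ - μ₀) := Dnonneg μ₀ b β _ (by linarith) hβ1 hβ2 hb
  have hc2 : 0 < 1 + αs * (x₂ - μ₀) := by nlinarith [mul_nonneg hαs0.le hv]
  by_cases hc1 : 1 + αs * (x₁ - μ₀) ≤ 0
  · -- logE c₁ = ⊥
    by_cases hθ : (x₂ - μ₁) / (x₂ - x₁) = 0
    · have hx₂μ : x₂ = μ₁ := by
        have := div_eq_zero_iff.1 hθ
        rcases this with h | h
        · linarith [sub_eq_zero.1 h]
        · exact absurd h hx'.ne'
      have hD2β : 0 < 1 + β * (x₂ - μ₀) :=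
        Dpos μ₀ b β _ (by linarith) hβ1 hβ2 hb
      have hD2β' : 0 < 1 + β' * (x₂ - μ₀) :=
        Dpos μ₀ b β' _ (by linarith) hβ'1 hβ'2 hb
      rw [hθ]
      simp only [EReal.coe_zero, zero_mul, zero_add, sub_zero, EReal.coe_one, one_mul]
      rw [logE_of_pos hc2, logE_of_pos hD2β, logE_of_pos hD2β']
      rw [← EReal.coe_sub, ← EReal.coe_sub, EReal.coe_le_coe_iff]
      have : Real.log (1 + β * (x₂ - μ₀)) ≤ Real.log (1 + β' * (x₂ - μ₀)) := by
        apply Real.log_le_log hD2β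
        nlinarith [mul_nonneg (sub_nonneg.2 hle) hv]
      linarith
    · have hθpos : 0 < (x₂ - μ₁) / (x₂ - x₁) := lt_of_le_of_ne hθ0 (Ne.symm hθ)
      have hbot : ∀ γ : ℝ, 0 < 1 + γ * (x₁ - μ₀) →
          ((((x₂ - μ₁) / (x₂ - x₁)) : ℝ) : EReal) *
            (logE (1 + αs * (x₁ - μ₀)) - logE (1 + γ * (x₁ - μ₀))) +
          (((1 - (x₂ - μ₁) / (x₂ - x₁)) : ℝ) : EReal) *
            (logE (1 + αs * (x₂ - μ₀)) - logE (1 + γ * (x₂ - μ₀))) = ⊥ := by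
        intro γ hγ
        rw [logE_of_nonpos hc1, logE_of_pos hγ, EReal.bot_sub,
          EReal.coe_mul_bot_of_pos hθpos, EReal.bot_add]
      rw [hbot β hD1β, hbot β' hD1β']
  · push_neg at hc1
    by_cases hD2β : 0 < 1 + β * (x₂ - μ₀)
    · have hD2β' : 0 < 1 + β' * (x₂ - μ₀) := by
        nlinarith [mul_nonneg (sub_nonneg.2 hle) hv]
      rw [logE_of_pos hc1, logE_of_pos hc2, logE_of_pos hD1β, logE_of_pos hD1β',
        logE_of_pos hD2β, logE_of_pos hD2β']
      have hreal := realmono μ₀ μ₁ x₁ x₂ β β' h2 hx₁μ hμx₂ hx hβ'2 hle hD1β hD2β hD1β' hD2β'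
      have : (x₂ - μ₁) / (x₂ - x₁) * (Real.log (1 + αs * (x₁ - μ₀)) - Real.log (1 + β' * (x₁ - μ₀))) +
          (1 - (x₂ - μ₁) / (x₂ - x₁)) * (Real.log (1 + αs * (x₂ - μ₀)) - Real.log (1 + β' * (x₂ - μ₀))) ≤
          (x₂ - μ₁) / (x₂ - x₁) * (Real.log (1 + αs * (x₁ - μ₀)) - Real.log (1 + β * (x₁ - μ₀))) +
          (1 - (x₂ - μ₁) / (x₂ - x₁)) * (Real.log (1 + αs * (x₂ - μ₀)) - Real.log (1 + β * (x₂ - μ₀))) := by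
        nlinarith [hreal]
      exact_mod_cast this
    · have hD2β0 : 1 + β * (x₂ - μ₀) = 0 := le_antisymm (not_lt.1 hD2β) hD2βnn
      rcases eq_or_lt_of_le hle with rfl | hlt
      · exact le_refl _
      · have hv0 : 0 < x₂ - μ₀ := by
          by_contra h
          push_neg at h
          nlinarith [mul_nonneg (neg_nonneg.2 hβ2) (neg_nonneg.2 h)]
        have hD2β' : 0 < 1 + β' * (x₂ - μ₀) := by
          nlinarith [mul_pos (sub_pos.2 hlt) hv0]
        by_cases hθ1' : (x₂ - μ₁) / (x₂ - x₁) = 1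
        · have hμ₁x₁ : μ₁ = x₁ := by
            have := (div_eq_one_iff_eq hx'.ne').1 hθ1'
            linarith
          rw [hθ1']
          simp only [sub_self, EReal.coe_zero, zero_mul, add_zero, EReal.coe_one, one_mul]
          rw [logE_of_pos hc1, logE_of_pos hD1β, logE_of_pos hD1β']
          rw [← EReal.coe_sub, ← EReal.coe_sub, EReal.coe_le_coe_iff]
          have hu : 0 ≤ x₁ - μ₀ := by linarith
          have : Real.log (1 + β * (x₁ - μ₀)) ≤ Real.log (1 + β' * (x₁ - μ₀)) := by
            apply Real.log_le_log hD1β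
            nlinarith [mul_nonneg (sub_nonneg.2 hle) hu]
          linarith
        · have h1θpos : 0 < 1 - (x₂ - μ₁) / (x₂ - x₁) := lt_of_le_of_ne (by linarith) (by
            intro h
            exact hθ1' (by linarith))
          have htop : ((((x₂ - μ₁) / (x₂ - x₁)) : ℝ) : EReal) *
              (logE (1 + αs * (x₁ - μ₀)) - logE (1 + β * (x₁ - μ₀))) +
            (((1 - (x₂ - μ₁) / (x₂ - x₁)) : ℝ) : EReal) *
              (logE (1 + αs * (x₂ - μ₀)) - logE (1 + β * (x₂ - μ₀))) = ⊤ := by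
            rw [logE_of_nonpos hD2β0.le, logE_of_pos hc2, EReal.coe_sub_bot,
              EReal.coe_mul_top_of_pos h1θpos, logE_of_pos hc1, logE_of_pos hD1β,
              ← EReal.coe_sub, ← EReal.coe_mul, EReal.coe_add_top]
          rw [htop]
          exact le_top
end

section
/- Let μ be a Borel probability measure on [a,b] with mean x ∈ (a,b), no atom at x, and suppose E_μ[f] < f(x) for a Borel measurable f integrable under μ with E_μ[|f|] < ∞. Then there exist y, z ∈ [a,b] with y < x < z such that the two-point probability measure θ on {y,z} with mean x satisfies E_θ[f] ≤ E_μ[f]. -/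
open MeasureTheory Set

lemma setIntegral_pos_of_pos {μ : Measure ℝ} {s : Set ℝ} (hs : MeasurableSet s)
    {g : ℝ → ℝ} (hg : IntegrableOn g s μ) (hpos : ∀ t ∈ s, 0 < g t) (hμs : 0 < μ s) :
    0 < ∫ t in s, g t ∂μ := by
  rw [setIntegral_pos_iff_support_of_nonneg_ae]
  · refine lt_of_lt_of_le hμs (measure_mono ?_)
    intro t ht
    exact ⟨ne_of_gt (hpos t ht), ht⟩
  · rw [Filter.EventuallyLE, ae_restrict_iff' hs]
    exact Filter.Eventually.of_forall fun t ht => (hpos t ht).le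
  · exact hg

theorem stmt19 (a b x : ℝ) (hab : a < b) (hx : x ∈ Ioo a b)
    (μ : Measure ℝ) (hμ : IsProbabilityMeasure μ) (hsupp : μ (Icc a b)ᶜ = 0)
    (hmean : (∫ t, t ∂μ) = x) (hatom : μ {x} = 0)
    (f : ℝ → ℝ) (hf : Measurable f) (hint : Integrable f μ)
    (hlt : (∫ t, f t ∂μ) < f x) :
    ∃ y z : ℝ, y ∈ Icc a b ∧ z ∈ Icc a b ∧ y < x ∧ x < z ∧
      ((z - x) / (z - y)) * f y + ((x - y) / (z - y)) * f z ≤ ∫ t, f t ∂μ := by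
  by_contra hcon
  push_neg at hcon
  set F := ∫ t, f t ∂μ with hF
  -- a.e. membership in Icc a b
  have haemem : ∀ᵐ t ∂μ, t ∈ Icc a b := by
    rw [ae_iff]
    convert hsupp using 2
    rfl
  -- integrability of the identity
  have hid : Integrable (fun t : ℝ => t) μ := by
    refine Integrable.mono' (integrable_const (max |a| |b|))
      measurable_id.aestronglyMeasurable ?_
    filter_upwards [haemem] with t ht
    rw [Real.norm_eq_abs, abs_le]
    constructor
    · have : -|a| ≤ a := neg_abs_le a
      have : a ≤ |a| := le_abs_self a
      have := le_max_left |a| |b|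
      linarith [ht.1, neg_abs_le a, le_max_left |a| |b|]
    · linarith [ht.2, le_abs_self b, le_max_right |a| |b|]
  have hμuniv : μ univ = 1 := measure_univ
  -- ∫ (t - x) = 0
  have hmean0 : ∫ t, (t - x) ∂μ = 0 := by
    rw [integral_sub hid (integrable_const x), hmean, integral_const]
    simp
  have hxmid0 : Integrable (fun t : ℝ => x - t) μ := by
    have := (integrable_const x).sub hid
    simpa [Pi.sub_def] using this
  have hidmx0 : Integrable (fun t : ℝ => t - x) μ := by
    have := hid.sub (integrable_const x)
    simpa [Pi.sub_def] using this
  have hcompl : μ {x}ᶜ ≠ 0 := by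
    intro h
    have := measure_add_measure_compl (μ := μ) (measurableSet_singleton x)
    rw [hatom, h, hμuniv] at this
    simp at this
  -- μ (Iio x) > 0
  have hIio : 0 < μ (Iio x) := by
    rcases eq_zero_or_pos (μ (Iio x)) with h0 | h
    · exfalso
      have hae : 0 ≤ᵐ[μ] fun t => t - x := by
        rw [Filter.EventuallyLE, ae_iff]
        refine measure_mono_null (fun t ht => ?_) h0
        simp only [Pi.zero_apply, mem_setOf_eq, not_le] at ht
        simp only [mem_Iio]
        linarith
      have heq := (integral_eq_zero_iff_of_nonneg_ae hae hidmx0).mp hmean0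
      have hxx : ∀ᵐ t ∂μ, t = x := by
        filter_upwards [heq] with t ht
        simpa [sub_eq_zero] using ht
      rw [ae_iff] at hxx
      apply hcompl
      rw [← hxx]
      congr 1
    · exact h
  -- μ (Ioi x) > 0
  have hIoi : 0 < μ (Ioi x) := by
    rcases eq_zero_or_pos (μ (Ioi x)) with h0 | h
    · exfalso
      have hae : 0 ≤ᵐ[μ] fun t => x - t := by
        rw [Filter.EventuallyLE, ae_iff]
        refine measure_mono_null (fun t ht => ?_) h0
        simp only [Pi.zero_apply, mem_setOf_eq, not_le] at ht
        simp only [mem_Ioi]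
        linarith
      have hmean0' : ∫ t, (x - t) ∂μ = 0 := by
        rw [integral_sub (integrable_const x) hid, hmean, integral_const]
        simp
      have heq := (integral_eq_zero_iff_of_nonneg_ae hae hxmid0).mp hmean0'
      have hxx : ∀ᵐ t ∂μ, t = x := by
        filter_upwards [heq] with t ht
        have : x - t = 0 := ht
        linarith [sub_eq_zero.mp this]
      rw [ae_iff] at hxx
      apply hcompl
      rw [← hxx]
      congr 1
    · exact h
  -- the sets A and B
  set A : Set ℝ := Icc a b ∩ Iio x with hA
  set B : Set ℝ := Icc a b ∩ Ioi x with hB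
  have hAmeas : MeasurableSet A := (measurableSet_Icc).inter measurableSet_Iio
  have hBmeas : MeasurableSet B := (measurableSet_Icc).inter measurableSet_Ioi
  have hAe : A =ᵐ[μ] Iio x := by
    rw [Filter.eventuallyEq_set]
    filter_upwards [haemem] with t ht
    simp [hA, ht]
  have hBe : B =ᵐ[μ] Ioi x := by
    rw [Filter.eventuallyEq_set]
    filter_upwards [haemem] with t ht
    simp [hB, ht]
  have hIci : (Ici x : Set ℝ) =ᵐ[μ] Ioi x := by
    rw [Filter.eventuallyEq_set, ae_iff]
    refine measure_mono_null (fun t ht => ?_) hatom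
    simp only [mem_setOf_eq, mem_Ici, mem_Ioi] at ht
    simp only [mem_singleton_iff]
    by_contra h'
    exact ht ⟨fun h1 => lt_of_le_of_ne h1 (Ne.symm h'), le_of_lt⟩
  have hμA : 0 < μ A := by rwa [measure_congr hAe]
  have hμB : 0 < μ B := by rwa [measure_congr hBe]
  -- integrability facts
  have hgint : Integrable (fun t => f t - F) μ := hint.sub (integrable_const F)
  have hxmid : Integrable (fun t : ℝ => x - t) μ := by
    have := (integrable_const x).sub hid
    simpa [Pi.sub_def] using this
  have hidmx : Integrable (fun t : ℝ => t - x) μ := by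
    have := hid.sub (integrable_const x)
    simpa [Pi.sub_def] using this
  -- constants
  set c : ℝ := ∫ y in A, (x - y) ∂μ with hc
  set GA : ℝ := ∫ y in A, (f y - F) ∂μ with hGA
  set GB : ℝ := ∫ z in B, (f z - F) ∂μ with hGB
  have hcpos : 0 < c := by
    refine setIntegral_pos_of_pos hAmeas (hxmid.integrableOn) ?_ hμA
    intro t ht
    have : t < x := ht.2
    linarith
  -- c' = ∫ z in B, (z - x) = c
  have hsplit : ∀ (g : ℝ → ℝ), Integrable g μ →
      (∫ t in Iio x, g t ∂μ) + (∫ t in Ioi x, g t ∂μ) = ∫ t, g t ∂μ := by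
    intro g hg
    rw [← setIntegral_congr_set hIci, ← setIntegral_union (Iio_disjoint_Ici le_rfl)
      measurableSet_Ici hg.integrableOn hg.integrableOn, Iio_union_Ici,
      setIntegral_univ]
  have hcB : (∫ z in B, (z - x) ∂μ) = c := by
    rw [setIntegral_congr_set hBe, hc, setIntegral_congr_set hAe]
    have h1 := hsplit (fun t => t - x) hidmx
    rw [hmean0] at h1
    have h2 : (∫ t in Iio x, (x - t) ∂μ) = - ∫ t in Iio x, (t - x) ∂μ := by
      rw [← integral_neg]
      congr 1
      funext t
      ring
    linarith
  -- GA + GB = 0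
  have hGsum : GA + GB = 0 := by
    have h0 : ∫ t, (f t - F) ∂μ = 0 := by
      rw [integral_sub hint (integrable_const F), integral_const]
      simp [hF]
    rw [hGA, hGB, setIntegral_congr_set hAe, setIntegral_congr_set hBe,
      hsplit _ hgint, h0]
  -- pointwise positivity from hcon
  have hptwise : ∀ y ∈ A, ∀ z ∈ B,
      0 < (z - x) * (f y - F) + (x - y) * (f z - F) := by
    intro y hy z hz
    have hy1 : y < x := hy.2
    have hz1 : x < z := hz.2
    have hyz : 0 < z - y := by linarith
    have h := hcon y z hy.1 hz.1 hy1 hz1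
    have h' : F * (z - y) < (z - x) * f y + (x - y) * f z := by
      have hne : z - y ≠ 0 := ne_of_gt hyz
      rw [div_mul_eq_mul_div, div_mul_eq_mul_div, ← add_div, lt_div_iff₀ hyz] at h
      linarith
    nlinarith
  -- the key function on B is positive pointwise
  have hφpos : ∀ z ∈ B, 0 < (z - x) * GA + c * (f z - F) := by
    intro z hz
    have heq : (z - x) * GA + c * (f z - F)
        = ∫ y in A, ((z - x) * (f y - F) + (x - y) * (f z - F)) ∂μ := by
      rw [integral_add ((hgint.integrableOn).const_mul _)
        ((hxmid.integrableOn).mul_const _),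
        integral_mul_const, integral_const_mul]
    rw [heq]
    refine setIntegral_pos_of_pos hAmeas ?_ (fun y hy => hptwise y hy z hz) hμA
    exact ((hgint.integrableOn).const_mul _).add
      ((hxmid.integrableOn).mul_const _)
  -- but its integral over B is zero
  have hφint : IntegrableOn (fun z => (z - x) * GA + c * (f z - F)) B μ :=
    ((hidmx.integrableOn).mul_const _).add
      ((hgint.integrableOn).const_mul _)
  have hzero : (∫ z in B, ((z - x) * GA + c * (f z - F)) ∂μ) = 0 := by
    rw [integral_add ((hidmx.integrableOn).mul_const _)
      ((hgint.integrableOn).const_mul _), integral_mul_const, integral_const_mul,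
      hcB, ← hGB]
    have : c * GA + c * GB = c * (GA + GB) := by ring
    rw [this, hGsum, mul_zero]
  have hpos := setIntegral_pos_of_pos hBmeas hφint hφpos hμB
  rw [hzero] at hpos
  exact lt_irrefl 0 hpos
end
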